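/- Let (x_i, f_i) be a Schauder frame of a Banach space X with projection constant K. Then the closed linear span of (f_i)_{i∈ℕ} in X* is a norming subspace of X*: for every x ∈ X, ‖x‖ ≤ K · sup{ |f(x)| : f in the closed linear span of (f_i), ‖f‖ ≤ 1 }. -/

import Mathlib

open Filter Topology

/-- Let `(x i, f i)` be a Schauder frame of a Banach space `X` with
projection constant `K`. Then the closed linear span of `(f i)` in `X*` is a norming
subspace: `‖v‖ ≤ K * sup { |g v| : g in the closed span of (f i), ‖g‖ ≤ 1 }`, expressed
via all upper bounds `C` of that set. -/
theorem schauderFrame_closedSpan_norming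
    {X : Type*} [NormedAddCommGroup X] [NormedSpace ℝ X] [CompleteSpace X]
    (x : ℕ → X) (f : ℕ → X →L[ℝ] ℝ)
    (hx : ∀ i, x i ≠ 0) (hf : ∀ i, f i ≠ 0)
    (hframe : ∀ v : X,
      Tendsto (fun n => ∑ i ∈ Finset.range n, f i v • x i) atTop (𝓝 v))
    (K : ℝ)
    (hK : IsLUB {r : ℝ | ∃ (v : X) (m n : ℕ), ‖v‖ ≤ 1 ∧ m ≤ n ∧
      r = ‖∑ i ∈ Finset.Icc m n, f i v • x i‖} K) :
    ∀ v : X, ∀ C : ℝ,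
      (∀ g ∈ closure ((Submodule.span ℝ (Set.range f) : Submodule ℝ (X →L[ℝ] ℝ)) :
          Set (X →L[ℝ] ℝ)), ‖g‖ ≤ 1 → |g v| ≤ C) →
      ‖v‖ ≤ K * C := by
  intro v C hC
  -- K ≥ 0
  have hK0 : 0 ≤ K := by
    apply hK.1
    refine ⟨0, 0, 0, by simp, le_refl 0, ?_⟩
    simp
  -- C ≥ 0
  have hC0 : 0 ≤ C := by
    have := hC 0 (subset_closure (Submodule.zero_mem _)) (by simp)
    simpa using this
  -- partial sum bound: for any u with ‖u‖ ≤ 1 and any n, ‖∑_{i<n} f i u • x i‖ ≤ K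
  have hSbound : ∀ (u : X), ‖u‖ ≤ 1 → ∀ n : ℕ,
      ‖∑ i ∈ Finset.range n, f i u • x i‖ ≤ K := by
    intro u hu n
    cases n with
    | zero => simpa using hK0
    | succ m =>
      have hrange : Finset.range (m + 1) = Finset.Icc 0 m := by
        ext i; simp [Nat.lt_succ_iff]
      rw [hrange]
      exact hK.1 ⟨u, 0, m, hu, Nat.zero_le m, rfl⟩
  by_cases hv : v = 0
  · subst hv; simpa using mul_nonneg hK0 hC0
  obtain ⟨φ, hφ1, hφv⟩ := exists_dual_vector ℝ v (norm_ne_zero_iff.mpr hv)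
  -- φ is real valued since 𝕜 = ℝ
  -- define g n = ∑_{i<n} φ (x i) • f i
  set g : ℕ → (X →L[ℝ] ℝ) := fun n => ∑ i ∈ Finset.range n, φ (x i) • f i with hg
  have hgmem : ∀ n, g n ∈ (Submodule.span ℝ (Set.range f) : Submodule ℝ (X →L[ℝ] ℝ)) := by
    intro n
    exact Submodule.sum_mem _ fun i _ =>
      Submodule.smul_mem _ _ (Submodule.subset_span ⟨i, rfl⟩)
  have hgval : ∀ n (u : X), g n u = φ (∑ i ∈ Finset.range n, f i u • x i) := by
    intro n u
    rw [map_sum]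
    simp only [hg, ContinuousLinearMap.coe_sum', Finset.sum_apply,
      ContinuousLinearMap.coe_smul', Pi.smul_apply, map_smul]
    exact Finset.sum_congr rfl fun i _ => by
      simp [smul_eq_mul, mul_comm]
  have hgnorm : ∀ n, ‖g n‖ ≤ K := by
    intro n
    refine ContinuousLinearMap.opNorm_le_bound _ hK0 fun u => ?_
    rcases eq_or_ne u 0 with rfl | hu0
    · simp
    have h1 : ‖g n u‖ = ‖φ (∑ i ∈ Finset.range n, f i u • x i)‖ := by rw [hgval]
    have h2 : ‖φ (∑ i ∈ Finset.range n, f i u • x i)‖ ≤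
        ‖∑ i ∈ Finset.range n, f i u • x i‖ := by
      calc ‖φ (∑ i ∈ Finset.range n, f i u • x i)‖
          ≤ ‖φ‖ * ‖∑ i ∈ Finset.range n, f i u • x i‖ := φ.le_opNorm _
        _ ≤ ‖∑ i ∈ Finset.range n, f i u • x i‖ := by rw [hφ1]; simp
    have h3 : ‖∑ i ∈ Finset.range n, f i (‖u‖⁻¹ • u) • x i‖ ≤ K := by
      apply hSbound
      rw [norm_smul, norm_inv, norm_norm]
      exact le_of_eq (inv_mul_cancel₀ (norm_ne_zero_iff.mpr hu0))
    have h4 : ∑ i ∈ Finset.range n, f i (‖u‖⁻¹ • u) • x i =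
        ‖u‖⁻¹ • ∑ i ∈ Finset.range n, f i u • x i := by
      rw [Finset.smul_sum]
      exact Finset.sum_congr rfl fun i _ => by
        rw [map_smul, smul_eq_mul, mul_smul]
    rw [h4, norm_smul, norm_inv, norm_norm] at h3
    have h5 : ‖∑ i ∈ Finset.range n, f i u • x i‖ ≤ K * ‖u‖ := by
      have hpos : (0:ℝ) < ‖u‖ := norm_pos_iff.mpr hu0
      have h6 := mul_le_mul_of_nonneg_left h3 hpos.le
      rw [← mul_assoc, mul_inv_cancel₀ hpos.ne', one_mul, mul_comm] at h6
      exact h6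
    calc ‖g n u‖ ≤ ‖∑ i ∈ Finset.range n, f i u • x i‖ := h1 ▸ h2
      _ ≤ K * ‖u‖ := h5
  -- each |g n v| ≤ K * C
  have hkey : ∀ n, |g n v| ≤ K * C := by
    intro n
    rcases eq_or_lt_of_le hK0 with hKz | hKpos
    · have : ‖g n‖ ≤ 0 := by rw [hKz]; exact hgnorm n
      have hgz : g n = 0 := le_antisymm this (norm_nonneg _) |> norm_eq_zero.mp
      simp [hgz, ← hKz, mul_nonneg hK0 hC0]
    · have hmem : K⁻¹ • g n ∈ closure ((Submodule.span ℝ (Set.range f) :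
          Submodule ℝ (X →L[ℝ] ℝ)) : Set (X →L[ℝ] ℝ)) :=
        subset_closure (Submodule.smul_mem _ _ (hgmem n))
      have hnorm : ‖K⁻¹ • g n‖ ≤ 1 := by
        have : ‖K⁻¹ • g n‖ = K⁻¹ * ‖g n‖ := by
          rw [norm_smul K⁻¹ (g n), norm_inv, Real.norm_of_nonneg hK0]
        rw [this, inv_mul_le_iff₀ hKpos, mul_one]
        exact hgnorm n
      have := hC _ hmem hnorm
      have heq : |(K⁻¹ • g n) v| = K⁻¹ * |g n v| := by
        simp [abs_mul, abs_of_nonneg (inv_nonneg.mpr hK0)]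
      rw [heq, inv_mul_le_iff₀ hKpos] at this
      linarith [this]
  -- take the limit
  have hlim : Tendsto (fun n => g n v) atTop (𝓝 (φ v)) := by
    have := (φ.continuous.tendsto v).comp (hframe v)
    simpa only [Function.comp_def, hgval] using this
  have hle : φ v ≤ K * C := le_of_tendsto hlim
    (Filter.Eventually.of_forall fun n => le_trans (le_abs_self _) (hkey n))
  calc ‖v‖ = φ v := by
        have := hφv
        exact_mod_cast this.symm
    _ ≤ K * C := hle
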